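/- Let X be a reflexive smooth real Banach space and T : X → X a nonzero compact linear operator. Then there exists a unit vector x ∈ X such that T preserves Birkhoff-James orthogonality at x: for any y ∈ X, x ⊥_B y if and only if Tx ⊥_B Ty. -/

import Mathlib

/-- Birkhoff-James orthogonality: `u ⊥_B v` iff `‖u + λ v‖ ≥ ‖u‖` for all real `λ`. -/
def BJOrth {E : Type*} [NormedAddCommGroup E] [NormedSpace ℝ E] (u v : E) : Prop :=
  ∀ l : ℝ, ‖u‖ ≤ ‖u + l • v‖

/-- James' characterization: if `u ⊥_B v` then there is a norming functional of `u`
vanishing on `v`. -/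
lemma james_lemma {X : Type*} [NormedAddCommGroup X] [NormedSpace ℝ X]
    {u v : X} (h : BJOrth u v) :
    ∃ f : X →L[ℝ] ℝ, ‖f‖ ≤ 1 ∧ f u = ‖u‖ ∧ f v = 0 := by
  by_cases hu : u = 0
  · exact ⟨0, by simp [hu]⟩
  set M : Submodule ℝ X := Submodule.span ℝ {v} with hM
  haveI : IsClosed (M : Set X) := Submodule.closed_of_finiteDimensional _
  have hvM : v ∈ M := Submodule.mem_span_singleton_self v
  have hnorm : ‖(Submodule.Quotient.mk u : X ⧸ M)‖ = ‖u‖ := by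
    refine le_antisymm (Submodule.Quotient.norm_mk_le _ _) ?_
    by_contra hlt
    push_neg at hlt
    obtain ⟨m, hm, hmn⟩ := Submodule.Quotient.norm_mk_lt
      (Submodule.Quotient.mk u : X ⧸ M) (sub_pos.mpr hlt)
    have hmem : m - u ∈ M := (Submodule.Quotient.eq M).mp hm
    obtain ⟨l, hl⟩ := Submodule.mem_span_singleton.mp hmem
    have hmu : m = u + l • v := by
      have h2 : m = l • v + u := sub_eq_iff_eq_add.mp hl.symm
      rw [h2, add_comm]
    have h3 := h l
    rw [← hmu] at h3
    linarith
  have hq : (Submodule.Quotient.mk u : X ⧸ M) ≠ 0 := by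
    intro h0
    rw [h0, norm_zero] at hnorm
    exact hu (norm_eq_zero.mp hnorm.symm)
  obtain ⟨φ, hφ1, hφu⟩ := exists_dual_vector ℝ (Submodule.Quotient.mk u : X ⧸ M) (norm_ne_zero_iff.mpr hq)
  have hbound : ∀ y : X, ‖(φ.toLinearMap.comp M.mkQ) y‖ ≤ 1 * ‖y‖ := by
    intro y
    calc ‖φ (Submodule.Quotient.mk y)‖ ≤ ‖φ‖ * ‖(Submodule.Quotient.mk y : X ⧸ M)‖ :=
          φ.le_opNorm _
      _ ≤ 1 * ‖y‖ := by
          rw [hφ1]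
          exact mul_le_mul_of_nonneg_left (Submodule.Quotient.norm_mk_le _ _) zero_le_one
  refine ⟨(φ.toLinearMap.comp M.mkQ).mkContinuous 1 hbound, ?_, ?_, ?_⟩
  · exact LinearMap.mkContinuous_norm_le _ zero_le_one _
  · show φ (Submodule.Quotient.mk u) = ‖u‖
    rw [hφu, hnorm]
    norm_num
  · show φ (Submodule.Quotient.mk v) = 0
    rw [(Submodule.Quotient.mk_eq_zero M).mpr hvM, map_zero]

theorem stmt14 {X : Type*} [NormedAddCommGroup X] [NormedSpace ℝ X] [CompleteSpace X]
    (hrefl : Function.Surjective (NormedSpace.inclusionInDoubleDual ℝ X))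
    (hsm : ∀ z : X, ‖z‖ = 1 → ∃! f : X →L[ℝ] ℝ, ‖f‖ = 1 ∧ f z = 1)
    (T : X →L[ℝ] X) (hT : T ≠ 0) (hcomp : IsCompactOperator T) :
    ∃ x : X, ‖x‖ = 1 ∧ ∀ y : X, (BJOrth x y ↔ BJOrth (T x) (T y)) := by
  have hTpos : (0:ℝ) < ‖T‖ := norm_pos_iff.mpr hT
  -- a norming sequence
  have hseq : ∀ n : ℕ, ∃ x : X, ‖x‖ < 1 ∧ ‖T‖ - 1/(n+1) < ‖T x‖ := fun n =>
    T.exists_lt_apply_of_lt_opNorm (by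
      have : (0:ℝ) < 1/(n+1) := by positivity
      linarith)
  choose xs hxs1 hxs2 using hseq
  have hxsle : ∀ n, ‖T (xs n)‖ ≤ ‖T‖ := fun n => by
    calc ‖T (xs n)‖ ≤ ‖T‖ * ‖xs n‖ := T.le_opNorm _
      _ ≤ ‖T‖ * 1 := by
          exact mul_le_mul_of_nonneg_left (le_of_lt (hxs1 n)) (le_of_lt hTpos)
      _ = ‖T‖ := mul_one _
  have htend : Filter.Tendsto (fun n => ‖T (xs n)‖) Filter.atTop (nhds ‖T‖) := by
    have h1 : Filter.Tendsto (fun n : ℕ => ‖T‖ - 1/(n+1)) Filter.atTop (nhds ‖T‖) := by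
      have := tendsto_one_div_add_atTop_nhds_zero_nat (𝕜 := ℝ)
      have := (tendsto_const_nhds (x := ‖T‖) (f := Filter.atTop (α := ℕ))).sub this
      simpa using this
    exact tendsto_of_tendsto_of_tendsto_of_le_of_le h1 tendsto_const_nhds
      (fun n => le_of_lt (hxs2 n)) hxsle
  -- compactness: extract a convergent subsequence of T (xs n)
  have hK : IsCompact (closure (⇑T '' Metric.closedBall 0 1)) :=
    hcomp.isCompact_closure_image_closedBall 1
  have hmem : ∀ n, T (xs n) ∈ closure (⇑T '' Metric.closedBall 0 1) := fun n =>
    subset_closure ⟨xs n, Metric.mem_closedBall.mpr (by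
      simpa using (le_of_lt (hxs1 n))), rfl⟩
  obtain ⟨z, -, φs, hφs, hzt⟩ := hK.tendsto_subseq hmem
  have hznorm : ‖z‖ = ‖T‖ := by
    have h1 : Filter.Tendsto (fun n => ‖T (xs (φs n))‖) Filter.atTop (nhds ‖z‖) :=
      (continuous_norm.tendsto z).comp hzt
    have h2 : Filter.Tendsto (fun n => ‖T (xs (φs n))‖) Filter.atTop (nhds ‖T‖) :=
      htend.comp hφs.tendsto_atTop
    exact tendsto_nhds_unique h1 h2
  have hz0 : z ≠ 0 := by
    intro h0; rw [h0, norm_zero] at hznorm; linarith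
  obtain ⟨g, hg1, hgz⟩ := exists_dual_vector ℝ z (norm_ne_zero_iff.mpr hz0)
  set h : X →L[ℝ] ℝ := g.comp T with hh_def
  have hhle : ‖h‖ ≤ ‖T‖ := by
    calc ‖h‖ ≤ ‖g‖ * ‖T‖ := ContinuousLinearMap.opNorm_comp_le _ _
      _ = ‖T‖ := by rw [hg1, one_mul]
  have hhge : ‖T‖ ≤ ‖h‖ := by
    have h1 : Filter.Tendsto (fun n => g (T (xs (φs n)))) Filter.atTop (nhds (g z)) :=
      (g.continuous.tendsto z).comp hzt
    rw [hgz] at h1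
    refine le_of_tendsto (by simpa [hznorm] using h1) (Filter.Eventually.of_forall fun n => ?_)
    calc g (T (xs (φs n))) ≤ ‖h (xs (φs n))‖ := by
          rw [hh_def]; exact le_abs_self _
      _ ≤ ‖h‖ * ‖xs (φs n)‖ := h.le_opNorm _
      _ ≤ ‖h‖ * 1 := mul_le_mul_of_nonneg_left (le_of_lt (hxs1 _)) (norm_nonneg _)
      _ = ‖h‖ := mul_one _
  have hh : ‖h‖ = ‖T‖ := le_antisymm hhle hhge
  have hhne : h ≠ 0 := by
    intro h0; rw [h0, norm_zero] at hh; linarith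
  obtain ⟨Φ, hΦ1, hΦh⟩ := exists_dual_vector ℝ h (norm_ne_zero_iff.mpr hhne)
  obtain ⟨x, hx⟩ := hrefl Φ
  have hx1 : ‖x‖ = 1 := by
    have := (NormedSpace.inclusionInDoubleDualLi ℝ (E := X)).norm_map x
    rw [show (NormedSpace.inclusionInDoubleDualLi ℝ (E := X)) x
        = NormedSpace.inclusionInDoubleDual ℝ X x from rfl, hx, hΦ1] at this
    exact this.symm
  have hgx : g (T x) = ‖T‖ := by
    have : h x = Φ h := by rw [← hx]; rfl
    rw [hh_def] at this
    simp only [ContinuousLinearMap.comp_apply] at this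
    rw [this, hΦh, hh]
    norm_num
  have hTx : ‖T x‖ = ‖T‖ := by
    refine le_antisymm ?_ ?_
    · calc ‖T x‖ ≤ ‖T‖ * ‖x‖ := T.le_opNorm x
        _ = ‖T‖ := by rw [hx1, mul_one]
    · calc ‖T‖ = g (T x) := hgx.symm
        _ ≤ ‖g (T x)‖ := le_abs_self _
        _ ≤ ‖g‖ * ‖T x‖ := g.le_opNorm _
        _ = ‖T x‖ := by rw [hg1, one_mul]
  have hTx0 : T x ≠ 0 := fun h0 => by rw [h0, norm_zero] at hTx; linarith
  set f : X →L[ℝ] ℝ := ‖T‖⁻¹ • h with hf_def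
  have hfapp : ∀ w : X, f w = ‖T‖⁻¹ * g (T w) := fun w => rfl
  have hfx : f x = 1 := by
    rw [hfapp, hgx, inv_mul_cancel₀ (ne_of_gt hTpos)]
  have hfn : ‖f‖ = 1 := by
    rw [hf_def, norm_smul ‖T‖⁻¹ h, hh, norm_inv, Real.norm_eq_abs, abs_of_pos hTpos,
      inv_mul_cancel₀ (ne_of_gt hTpos)]
  set u : X := ‖T x‖⁻¹ • T x with hu_def
  have hTxpos : (0:ℝ) < ‖T x‖ := by rw [hTx]; exact hTpos
  have hu1 : ‖u‖ = 1 := by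
    rw [hu_def, norm_smul, norm_inv, Real.norm_eq_abs, abs_of_pos hTxpos,
      inv_mul_cancel₀ (ne_of_gt hTxpos)]
  have hgu : g u = 1 := by
    rw [hu_def, map_smul, smul_eq_mul, hgx, ← hTx, inv_mul_cancel₀ (ne_of_gt hTxpos)]
  refine ⟨x, hx1, fun y => ⟨?_, ?_⟩⟩
  · -- forward: x ⊥ y → Tx ⊥ Ty
    intro hxy
    obtain ⟨f', hf'le, hf'x, hf'y⟩ := james_lemma hxy
    rw [hx1] at hf'x
    have hf'n : ‖f'‖ = 1 := by
      refine le_antisymm hf'le ?_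
      calc (1:ℝ) = f' x := hf'x.symm
        _ ≤ ‖f' x‖ := le_abs_self _
        _ ≤ ‖f'‖ * ‖x‖ := f'.le_opNorm x
        _ = ‖f'‖ := by rw [hx1, mul_one]
    have hff' : f' = f := by
      obtain ⟨f₀, -, huniq⟩ := hsm x hx1
      rw [huniq f' ⟨hf'n, hf'x⟩, huniq f ⟨hfn, hfx⟩]
    have hgTy : g (T y) = 0 := by
      have h1 : f y = 0 := by rw [← hff', hf'y]
      rw [hfapp] at h1
      exact (mul_eq_zero.mp h1).resolve_left (inv_ne_zero (ne_of_gt hTpos))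
    intro l
    calc ‖T x‖ = g (T x) := by rw [hgx, hTx]
      _ = g (T x + l • T y) := by rw [map_add, map_smul, smul_eq_mul, hgTy, mul_zero, add_zero]
      _ ≤ ‖g (T x + l • T y)‖ := le_abs_self _
      _ ≤ ‖g‖ * ‖T x + l • T y‖ := g.le_opNorm _
      _ = ‖T x + l • T y‖ := by rw [hg1, one_mul]
  · -- backward: Tx ⊥ Ty → x ⊥ y
    intro hxy
    have hu : BJOrth u (T y) := by
      intro l
      have heq : u + l • T y = ‖T x‖⁻¹ • (T x + (l * ‖T x‖) • T y) := by
        rw [smul_add, smul_smul, hu_def]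
        congr 2
        field_simp
      rw [hu1, heq, norm_smul, norm_inv, Real.norm_eq_abs, abs_of_pos hTxpos]
      have := hxy (l * ‖T x‖)
      calc (1:ℝ) = ‖T x‖⁻¹ * ‖T x‖ := (inv_mul_cancel₀ (ne_of_gt hTxpos)).symm
        _ ≤ ‖T x‖⁻¹ * ‖T x + (l * ‖T x‖) • T y‖ :=
            mul_le_mul_of_nonneg_left this (inv_nonneg.mpr (le_of_lt hTxpos))
    obtain ⟨h', hh'le, hh'u, hh'y⟩ := james_lemma hu
    rw [hu1] at hh'u
    have hh'n : ‖h'‖ = 1 := by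
      refine le_antisymm hh'le ?_
      calc (1:ℝ) = h' u := hh'u.symm
        _ ≤ ‖h' u‖ := le_abs_self _
        _ ≤ ‖h'‖ * ‖u‖ := h'.le_opNorm u
        _ = ‖h'‖ := by rw [hu1, mul_one]
    have hh'g : h' = g := by
      obtain ⟨g₀, -, huniq⟩ := hsm u hu1
      rw [huniq h' ⟨hh'n, hh'u⟩, huniq g ⟨hg1, hgu⟩]
    have hgTy : g (T y) = 0 := by rw [← hh'g, hh'y]
    have hfy : f y = 0 := by rw [hfapp, hgTy, mul_zero]
    intro l
    calc ‖x‖ = 1 := hx1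
      _ = f (x + l • y) := by rw [map_add, map_smul, smul_eq_mul, hfx, hfy, mul_zero, add_zero]
      _ ≤ ‖f (x + l • y)‖ := le_abs_self _
      _ ≤ ‖f‖ * ‖x + l • y‖ := f.le_opNorm _
      _ = ‖x + l • y‖ := by rw [hfn, one_mul]
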